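/- After the Deutsch-Jozsa circuit (Hadamard on control qubit, oracle U_g with target in |−⟩, final Hadamard on control), measuring the control qubit returns 0 with probability 1 if g is constant and returns 1 with probability 1 if g is balanced. -/

import Mathlib

/-- `sign b = (-1)^b` as a complex number. -/
noncomputable def qsign (b : Bool) : ℂ := if b then -1 else 1

/-- Hadamard gate applied to the control (first) qubit of a two-qubit state given by
its coefficients on the computational basis `Bool × Bool`. -/
noncomputable def Hc (ψ : Bool × Bool → ℂ) : Bool × Bool → ℂ :=
  fun p => (1 / Real.sqrt 2) * (ψ (false, p.2) + qsign p.1 * ψ (true, p.2))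

/-- Deutsch oracle `|x⟩|y⟩ ↦ |x⟩|y ⊕ g(x)⟩` acting on coefficient functions. -/
def Ug (g : Bool → Bool) (ψ : Bool × Bool → ℂ) : Bool × Bool → ℂ :=
  fun p => ψ (p.1, xor p.2 (g p.1))

/-- Initial state: control in `|0⟩`, target in `|−⟩ = (|0⟩−|1⟩)/√2`. -/
noncomputable def psi0 : Bool × Bool → ℂ :=
  fun p => (if p.1 = false then 1 else 0) * ((1 / Real.sqrt 2) * qsign p.2)

theorem deutsch_jozsa_measurement (g : Bool → Bool) :
    (‖(Hc (Ug g (Hc psi0))) (false, false)‖ ^ 2 +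
        ‖(Hc (Ug g (Hc psi0))) (false, true)‖ ^ 2 =
      if g false = g true then 1 else 0) ∧
    (‖(Hc (Ug g (Hc psi0))) (true, false)‖ ^ 2 +
        ‖(Hc (Ug g (Hc psi0))) (true, true)‖ ^ 2 =
      if g false = g true then 0 else 1) := by
  cases hf : g false <;> cases ht : g true <;>
    simp [Hc, Ug, psi0, qsign, hf, ht, Complex.norm_def, Complex.normSq] <;>
    field_simp <;>
    rw [Real.sq_sqrt (by positivity), Real.sq_sqrt (by positivity), sq_abs,
      Real.sq_sqrt (by norm_num),
      show Real.sqrt 2 ^ 4 = 4 by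
        rw [show (4:ℕ) = 2 * 2 from rfl, pow_mul, Real.sq_sqrt (by norm_num)]; norm_num] <;>
    norm_num
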